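/- For every n ≥ 1, τ₊(2^(2^n) − 1) ≤ 2n, where τ₊(z) is the minimal length of an addition–multiplication chain (operations + and × only, starting from 1) computing z. This follows from the identity F_n − 2 = F_{n−1} · (F_{n−1} − 2) for Fermat numbers F_i = 2^(2^i) + 1. -/

import Mathlib

/-- `Computes l z` : there is an addition–multiplication chain of length `l`
(operations `+` and `×` only), starting from the constant `1`, whose final
register equals `z`. -/
def Computes (l : ℕ) (z : ℤ) : Prop :=
  ∃ a : ℕ → ℤ, a 0 = 1 ∧
    (∀ i, 1 ≤ i → i ≤ l → ∃ j k, j < i ∧ k < i ∧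
      (a i = a j + a k ∨ a i = a j * a k)) ∧
    a l = z

/-- `τ₊ z` : minimal length of an addition–multiplication chain computing `z`. -/
noncomputable def tauPlus (z : ℤ) : ℕ := sInf {l : ℕ | Computes l z}

lemma computes_fermat (n : ℕ) (hn : 1 ≤ n) :
    Computes (2 * n) ((2 : ℤ) ^ (2 ^ n) - 1) := by
  refine ⟨fun i => if i = 0 then 1 else if i = 1 then 2 else
      if i % 2 = 0 then 2 ^ (2 ^ (i / 2)) - 1 else 2 ^ (2 ^ (i / 2)) + 1, by norm_num, ?_, ?_⟩
  · intro i hi hil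
    rcases eq_or_lt_of_le hi with h1 | h2
    · exact ⟨0, 0, by omega, by omega, Or.inl (by simp [← h1])⟩
    rcases eq_or_lt_of_le (by omega : 2 ≤ i) with h2' | h3
    · exact ⟨0, 1, by omega, by omega, Or.inl (by norm_num [← h2'])⟩
    -- i ≥ 3
    rcases Nat.even_or_odd i with he | ho
    · -- i even, i ≥ 4 : a i = a (i-2) * a (i-1)
      obtain ⟨k, hk⟩ := he
      have hk2 : 2 ≤ k := by omega
      obtain ⟨m, rfl⟩ : ∃ m, k = m + 1 := ⟨k - 1, by omega⟩
      refine ⟨i - 2, i - 1, by omega, by omega, Or.inr ?_⟩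
      have h1 : i % 2 = 0 := by omega
      have h2 : (i - 2) % 2 = 0 := by omega
      have h3 : (i - 1) % 2 = 1 := by omega
      have h4 : (i - 2) / 2 = m := by omega
      have h5 : (i - 1) / 2 = m := by omega
      have h6 : i / 2 = m + 1 := by omega
      simp only [h1, h2, h3, h4, h5, h6, if_neg (by omega : ¬ i = 0),
        if_neg (by omega : ¬ i = 1), if_neg (by omega : ¬ i - 2 = 0),
        if_neg (by omega : ¬ i - 2 = 1), if_neg (by omega : ¬ i - 1 = 0),
        if_neg (by omega : ¬ i - 1 = 1)]
      norm_num
      have h7 : (2:ℤ) ^ 2 ^ (m + 1) = (2 ^ 2 ^ m) * (2 ^ 2 ^ m) := by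
        rw [← pow_add]
        congr 1
        rw [pow_succ]
        omega
      rw [h7]; ring
    · -- i odd, i ≥ 3 : a i = a (i-1) + a 1
      obtain ⟨k, hk⟩ := ho
      have hk1 : 1 ≤ k := by omega
      refine ⟨i - 1, 1, by omega, by omega, Or.inl ?_⟩
      have h1 : i % 2 = 1 := by omega
      have h2 : (i - 1) % 2 = 0 := by omega
      have h4 : (i - 1) / 2 = k := by omega
      have h6 : i / 2 = k := by omega
      simp only [h1, h2, h4, h6, if_neg (by omega : ¬ i = 0),
        if_neg (by omega : ¬ i = 1), if_neg (by omega : ¬ i - 1 = 0),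
        if_neg (by omega : ¬ i - 1 = 1), if_pos rfl]
      norm_num
      ring
  · have h1 : 2 * n % 2 = 0 := by omega
    have h2 : 2 * n / 2 = n := by omega
    simp only [h1, h2, if_neg (by omega : ¬ 2 * n = 0), if_neg (by omega : ¬ 2 * n = 1)]
    norm_num

theorem tauPlus_fermat_minus_one (n : ℕ) (hn : 1 ≤ n) :
    tauPlus ((2 : ℤ) ^ (2 ^ n) - 1) ≤ 2 * n := by
  exact Nat.sInf_le (computes_fermat n hn)
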